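/- arXiv:2406.16393 — 2 statements merged into one kernel-verified Lean document; each statement's English description precedes it below -/
import Mathlib

section
/- For every real number x and natural number n, x^n = Σ_{k=0}^{n} S^B(n,k)·(x)^B_k, where (x)^B_k = (x−1)(x−3)···(x−2k+1) and (x)^B_0 = 1. -/
open Finset in
/-- The set `{±1, …, ±n}` of nonzero integers of absolute value at most `n`. -/
noncomputable def pmN (n : ℕ) : Finset ℤ := (Finset.Icc (-(n : ℤ)) (n : ℤ)).erase 0

/-- Negation of a block. -/
def negBlock (B : Finset ℤ) : Finset ℤ := B.image (fun x => -x)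

/-- `P` is a set partition of `[n]` of type `B`: a partition of `{±1,…,±n}` into nonempty
blocks closed under block negation, with at most one self-negative (zero) block. -/
def IsBPartition (n : ℕ) (P : Finset (Finset ℤ)) : Prop :=
  (∀ B ∈ P, B.Nonempty) ∧
  (∀ B ∈ P, ∀ C ∈ P, B ≠ C → Disjoint B C) ∧
  (∀ i ∈ pmN n, ∃ B ∈ P, i ∈ B) ∧
  (∀ B ∈ P, negBlock B ∈ P) ∧
  (P.filter (fun B => negBlock B = B)).card ≤ 1

noncomputable instance (n : ℕ) : DecidablePred (IsBPartition n) := fun P => by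
  unfold IsBPartition; infer_instance

/-- The finite set of all set partitions of `[n]` of type `B`. -/
noncomputable def BPartitions (n : ℕ) : Finset (Finset (Finset ℤ)) :=
  ((pmN n).powerset.powerset).filter (IsBPartition n)

/-- The type `B` Stirling number of the second kind: the number of type `B` set partitions
of `[n]` with exactly `k` representative non-zero block pairs. -/
noncomputable def SB (n k : ℕ) : ℕ :=
  ((BPartitions n).filter
    (fun P => (P.filter (fun B => negBlock B ≠ B)).card = 2 * k)).card
/-- The type `B` falling factorial `(x)^B_k = (x-1)(x-3)⋯(x-2k+1)`. -/
def fallB (x : ℝ) (k : ℕ) : ℝ := ∏ i ∈ Finset.range k, (x - (2 * (i : ℝ) + 1))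

namespace BPf
open Finset

lemma mem_negBlock {B : Finset ℤ} {x : ℤ} : x ∈ negBlock B ↔ -x ∈ B := by
  unfold negBlock
  simp only [mem_image]
  constructor
  · rintro ⟨y, hy, rfl⟩; simpa
  · intro h; exact ⟨-x, h, by simp⟩

lemma negBlock_negBlock (B : Finset ℤ) : negBlock (negBlock B) = B := by
  ext x; simp [mem_negBlock]

lemma negBlock_injective : Function.Injective negBlock :=
  Function.Involutive.injective negBlock_negBlock

lemma mem_pmN {n : ℕ} {i : ℤ} : i ∈ pmN n ↔ i ≠ 0 ∧ -(n:ℤ) ≤ i ∧ i ≤ n := by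
  simp [pmN, mem_Icc, mem_erase]

lemma neg_mem_pmN {n : ℕ} {i : ℤ} (h : i ∈ pmN n) : -i ∈ pmN n := by
  rw [mem_pmN] at h ⊢; omega

lemma card_pmN (n : ℕ) : (pmN n).card = 2 * n := by
  unfold pmN
  rw [card_erase_of_mem (by simp), Int.card_Icc]
  omega

def Gf (n : ℕ) (g : Fin n → ℤ) (i : ℤ) : ℤ :=
  if h : 1 ≤ i ∧ i ≤ (n:ℤ) then g ⟨(i-1).toNat, by omega⟩
  else if h' : 1 ≤ -i ∧ -i ≤ (n:ℤ) then -g ⟨(-i-1).toNat, by omega⟩ else 0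

lemma Gf_neg (n : ℕ) (g : Fin n → ℤ) (i : ℤ) : Gf n g (-i) = -Gf n g i := by
  unfold Gf
  simp only [neg_neg]
  split_ifs with h1 h2 h2 <;> first | omega | ring | simp

lemma Gf_coe (n : ℕ) (g : Fin n → ℤ) (t : Fin n) : Gf n g ((t:ℤ)+1) = g t := by
  have ht := t.isLt
  have h : 1 ≤ (t:ℤ)+1 ∧ (t:ℤ)+1 ≤ (n:ℤ) := by omega
  unfold Gf
  rw [dif_pos h]
  congr 1
  ext
  simp

noncomputable def blk (n : ℕ) (g : Fin n → ℤ) (i : ℤ) : Finset ℤ :=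
  (pmN n).filter (fun j => Gf n g j = Gf n g i)

noncomputable def phi (n : ℕ) (g : Fin n → ℤ) : Finset (Finset ℤ) := (pmN n).image (blk n g)

noncomputable def FF (n m : ℕ) : Finset (Fin n → ℤ) :=
  Fintype.piFinset (fun _ => Finset.Icc (-(m:ℤ)) (m:ℤ))

lemma card_FF (n m : ℕ) : (FF n m).card = (2*m+1)^n := by
  rw [FF, Fintype.card_piFinset]
  simp only [Int.card_Icc, prod_const, card_univ, Fintype.card_fin]
  congr 1
  omega

lemma mem_blk_self {n : ℕ} {g : Fin n → ℤ} {i : ℤ} (hi : i ∈ pmN n) : i ∈ blk n g i := by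
  simp [blk, hi]

lemma blk_eq_of_val_eq {n : ℕ} {g : Fin n → ℤ} {i j : ℤ} (h : Gf n g i = Gf n g j) :
    blk n g i = blk n g j := by
  unfold blk; rw [h]

lemma val_eq_of_mem_blk {n : ℕ} {g : Fin n → ℤ} {i j : ℤ} (h : j ∈ blk n g i) :
    Gf n g j = Gf n g i := (mem_filter.mp h).2

lemma blk_neg {n : ℕ} (g : Fin n → ℤ) (i : ℤ) : negBlock (blk n g i) = blk n g (-i) := by
  ext x
  simp only [blk, mem_negBlock, mem_filter, Gf_neg]
  constructor
  · rintro ⟨hx, hv⟩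
    exact ⟨by simpa using neg_mem_pmN hx, by omega⟩
  · rintro ⟨hx, hv⟩
    exact ⟨neg_mem_pmN hx, by omega⟩

lemma phi_mem_BPartitions (n : ℕ) (g : Fin n → ℤ) : phi n g ∈ BPartitions n := by
  rw [BPartitions, mem_filter]
  constructor
  · rw [mem_powerset]
    intro B hB
    rw [mem_powerset]
    obtain ⟨i, _, rfl⟩ := mem_image.mp hB
    exact filter_subset _ _
  constructor
  · -- nonempty
    intro B hB
    obtain ⟨i, hi, rfl⟩ := mem_image.mp hB
    exact ⟨i, mem_blk_self hi⟩
  constructor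
  · -- disjoint
    intro B hB C hC hne
    obtain ⟨i, hi, rfl⟩ := mem_image.mp hB
    obtain ⟨j, hj, rfl⟩ := mem_image.mp hC
    rw [disjoint_left]
    intro a ha ha'
    exact hne (blk_eq_of_val_eq (by rw [← val_eq_of_mem_blk ha, val_eq_of_mem_blk ha']))
  constructor
  · -- cover
    intro i hi
    exact ⟨blk n g i, mem_image_of_mem _ hi, mem_blk_self hi⟩
  constructor
  · -- neg closed
    intro B hB
    obtain ⟨i, hi, rfl⟩ := mem_image.mp hB
    rw [blk_neg]
    exact mem_image_of_mem _ (neg_mem_pmN hi)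
  · -- at most one zero block
    rw [card_le_one]
    intro B hB C hC
    simp only [mem_filter] at hB hC
    obtain ⟨hB1, hB2⟩ := hB
    obtain ⟨hC1, hC2⟩ := hC
    obtain ⟨i, hi, rfl⟩ := mem_image.mp hB1
    obtain ⟨j, hj, rfl⟩ := mem_image.mp hC1
    have hvi : Gf n g i = 0 := by
      have : -i ∈ blk n g i := by
        rw [← hB2, mem_negBlock]; simpa using mem_blk_self hi
      have := val_eq_of_mem_blk this
      rw [Gf_neg] at this
      omega
    have hvj : Gf n g j = 0 := by
      have : -j ∈ blk n g j := by
        rw [← hC2, mem_negBlock]; simpa using mem_blk_self hj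
      have := val_eq_of_mem_blk this
      rw [Gf_neg] at this
      omega
    exact blk_eq_of_val_eq (by rw [hvi, hvj])

def mu (B : Finset ℤ) : ℕ :=
  if h : (B.image Int.natAbs).Nonempty then (B.image Int.natAbs).min' h else 0

lemma mu_spec {B : Finset ℤ} (h : B.Nonempty) : ∃ b ∈ B, b.natAbs = mu B := by
  have h' : (B.image Int.natAbs).Nonempty := h.image _
  rw [mu, dif_pos h']
  have := min'_mem _ h'
  obtain ⟨b, hb, hb'⟩ := mem_image.mp this
  exact ⟨b, hb, hb'⟩

lemma mu_negBlock (B : Finset ℤ) : mu (negBlock B) = mu B := by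
  have : (negBlock B).image Int.natAbs = B.image Int.natAbs := by
    rw [negBlock, image_image]
    congr 1
    ext x
    simp
  rw [mu, mu, this]

/-- representative blocks: nonzero blocks containing their min absolute value positively -/
def reps (P : Finset (Finset ℤ)) : Finset (Finset ℤ) :=
  P.filter (fun B => negBlock B ≠ B ∧ ((mu B : ℤ)) ∈ B)

lemma reps_subset (P : Finset (Finset ℤ)) : reps P ⊆ P := filter_subset _ _

-- unpack the partition hypothesis
lemma bp_unpack {n : ℕ} {P : Finset (Finset ℤ)} (hP : P ∈ BPartitions n) :
    (∀ B ∈ P, B ⊆ pmN n) ∧ IsBPartition n P := by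
  rw [BPartitions, mem_filter, mem_powerset] at hP
  exact ⟨fun B hB => mem_powerset.mp (hP.1 hB), hP.2⟩

lemma zero_not_mem_block {n : ℕ} {P : Finset (Finset ℤ)} (hP : P ∈ BPartitions n)
    {B : Finset ℤ} (hB : B ∈ P) : (0:ℤ) ∉ B := by
  intro h
  have := (bp_unpack hP).1 B hB h
  rw [mem_pmN] at this
  exact this.1 rfl

lemma notboth {n : ℕ} {P : Finset (Finset ℤ)} (hP : P ∈ BPartitions n)
    {B : Finset ℤ} (hB : B ∈ reps P) : negBlock B ∉ reps P := by
  obtain ⟨hBP, hne, hrep⟩ := mem_filter.mp hB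
  intro h
  obtain ⟨-, -, hrep'⟩ := mem_filter.mp h
  rw [mu_negBlock, mem_negBlock] at hrep'
  -- now (mu B : ℤ) ∈ B and -(mu B) ∈ B
  have hmu0 : (mu B : ℤ) ≠ 0 := by
    intro h0
    exact zero_not_mem_block hP hBP (h0 ▸ hrep)
  have hnd : ¬ Disjoint B (negBlock B) := by
    rw [disjoint_left]
    push_neg
    exact ⟨(mu B : ℤ), hrep, by rwa [mem_negBlock]⟩
  have hdisj := (bp_unpack hP).2.2.1
  have hnegmem := (bp_unpack hP).2.2.2.2.1 B hBP
  by_cases heq : B = negBlock B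
  · exact hne heq.symm
  · exact hnd (hdisj B hBP (negBlock B) hnegmem heq)

lemma tri {n : ℕ} {P : Finset (Finset ℤ)} (hP : P ∈ BPartitions n)
    {B : Finset ℤ} (hB : B ∈ P) (hne : negBlock B ≠ B) :
    B ∈ reps P ∨ negBlock B ∈ reps P := by
  have hnonempty := (bp_unpack hP).2.1 B hB
  obtain ⟨b, hb, hb'⟩ := mu_spec hnonempty
  have hnegmem := (bp_unpack hP).2.2.2.2.1 B hB
  rcases Int.natAbs_eq b with h | h
  · left
    rw [reps, mem_filter]
    exact ⟨hB, hne, by rw [← hb']; rwa [← h]⟩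
  · right
    rw [reps, mem_filter]
    refine ⟨hnegmem, by rw [negBlock_negBlock]; exact fun h' => hne h'.symm, ?_⟩
    rw [mu_negBlock, mem_negBlock, ← hb', ← h]
    exact hb

lemma card_nzb {n : ℕ} {P : Finset (Finset ℤ)} (hP : P ∈ BPartitions n) :
    (P.filter (fun B => negBlock B ≠ B)).card = 2 * (reps P).card := by
  have hnegmem := (bp_unpack hP).2.2.2.2.1
  have key : P.filter (fun B => negBlock B ≠ B) = reps P ∪ (reps P).image negBlock := by
    ext B
    simp only [mem_filter, mem_union, mem_image]
    constructor
    · rintro ⟨hB, hne⟩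
      rcases tri hP hB hne with h | h
      · exact Or.inl h
      · exact Or.inr ⟨negBlock B, h, negBlock_negBlock B⟩
    · rintro (h | ⟨C, hC, rfl⟩)
      · exact ⟨(mem_filter.mp h).1, (mem_filter.mp h).2.1⟩
      · obtain ⟨hCP, hCne, -⟩ := mem_filter.mp hC
        refine ⟨hnegmem C hCP, ?_⟩
        rw [negBlock_negBlock]
        exact fun h' => hCne h'.symm
  rw [key, card_union_of_disjoint, card_image_of_injective _ negBlock_injective]
  · omega
  · rw [disjoint_left]
    intro B hB hB2
    obtain ⟨C, hC, rfl⟩ := mem_image.mp hB2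
    exact notboth hP hC hB

lemma block_card_le {n : ℕ} {P : Finset (Finset ℤ)} (hP : P ∈ BPartitions n) :
    P.card ≤ 2 * n := by
  classical
  have hne := (bp_unpack hP).2.1
  have hdisj := (bp_unpack hP).2.2.1
  have hsub := (bp_unpack hP).1
  rw [← card_pmN n]
  have hex : ∀ B ∈ P, ∃ x, x ∈ B := fun B hB => hne B hB
  choose f hf using hex
  apply card_le_card_of_injOn (fun B => if h : B ∈ P then f B h else 0)
  · intro B hB
    have hB' : B ∈ P := by simpa using hB
    simp only [dif_pos hB']
    exact hsub B hB' (hf B hB')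
  · intro B hB C hC hEq
    simp only [mem_coe] at hB hC
    simp only [dif_pos hB, dif_pos hC] at hEq
    by_contra hne'
    have hd := hdisj B hB C hC hne'
    rw [disjoint_left] at hd
    exact hd (hf B hB) (hEq ▸ hf C hC)

lemma reps_card_le {n : ℕ} {P : Finset (Finset ℤ)} (hP : P ∈ BPartitions n) :
    (reps P).card ≤ n := by
  have h1 := card_nzb hP
  have h2 : (P.filter (fun B => negBlock B ≠ B)).card ≤ P.card := card_filter_le _ _
  have h3 := block_card_le hP
  omega

noncomputable def blockOf (P : Finset (Finset ℤ)) (i : ℤ) : Finset ℤ :=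
  if h : ∃ B ∈ P, i ∈ B then h.choose else ∅

lemma blockOf_eq {n : ℕ} {P : Finset (Finset ℤ)} (hP : P ∈ BPartitions n)
    {B : Finset ℤ} {i : ℤ} (hB : B ∈ P) (hi : i ∈ B) : blockOf P i = B := by
  have h : ∃ B ∈ P, i ∈ B := ⟨B, hB, hi⟩
  rw [blockOf, dif_pos h]
  obtain ⟨hC, hiC⟩ := h.choose_spec
  by_contra hne
  have hd := (bp_unpack hP).2.2.1 _ hC B hB hne
  rw [disjoint_left] at hd
  exact hd hiC hi

lemma blockOf_mem {n : ℕ} {P : Finset (Finset ℤ)} (hP : P ∈ BPartitions n)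
    {i : ℤ} (hi : i ∈ pmN n) : blockOf P i ∈ P ∧ i ∈ blockOf P i := by
  obtain ⟨B, hB, hiB⟩ := (bp_unpack hP).2.2.2.1 i hi
  rw [blockOf_eq hP hB hiB]
  exact ⟨hB, hiB⟩

lemma blockOf_neg {n : ℕ} {P : Finset (Finset ℤ)} (hP : P ∈ BPartitions n)
    {i : ℤ} (hi : i ∈ pmN n) : blockOf P (-i) = negBlock (blockOf P i) := by
  obtain ⟨hBP, hiB⟩ := blockOf_mem hP hi
  exact blockOf_eq hP ((bp_unpack hP).2.2.2.2.1 _ hBP) (mem_negBlock.mpr (by simpa using hiB))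

/-- The value assigned to block `B` given sign and magnitude data on representative blocks. -/
def wval (P : Finset (Finset ℤ)) (s : {B // B ∈ reps P} → Bool) (e : {B // B ∈ reps P} → ℕ)
    (B : Finset ℤ) : ℤ :=
  if h : B ∈ reps P then (if s ⟨B, h⟩ then (e ⟨B, h⟩ : ℤ) else -(e ⟨B, h⟩ : ℤ))
  else if h2 : negBlock B ∈ reps P then
    (if s ⟨negBlock B, h2⟩ then -(e ⟨negBlock B, h2⟩ : ℤ) else (e ⟨negBlock B, h2⟩ : ℤ))
  else 0

lemma wval_negBlock {n : ℕ} {P : Finset (Finset ℤ)} (hP : P ∈ BPartitions n)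
    (s : {B // B ∈ reps P} → Bool) (e : {B // B ∈ reps P} → ℕ) (B : Finset ℤ) :
    wval P s e (negBlock B) = - wval P s e B := by
  by_cases h : B ∈ reps P
  · have h' : negBlock B ∉ reps P := notboth hP h
    rw [wval, wval, dif_neg h', dif_pos h]
    have : negBlock (negBlock B) ∈ reps P := by rwa [negBlock_negBlock]
    rw [dif_pos this]
    have he : (⟨negBlock (negBlock B), this⟩ : {B // B ∈ reps P}) = ⟨B, h⟩ := by
      simp [negBlock_negBlock]
    rw [he]
    by_cases hs : s ⟨B, h⟩ <;> simp [hs]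
  · by_cases h2 : negBlock B ∈ reps P
    · rw [wval, wval, dif_pos h2, dif_neg h]
      rw [dif_pos h2]
      by_cases hs : s ⟨negBlock B, h2⟩ <;> simp [hs]
    · have h2' : negBlock (negBlock B) ∉ reps P := by rwa [negBlock_negBlock]
      rw [wval, wval, dif_neg h, dif_neg h2, dif_neg h2, dif_neg h2']
      simp

lemma natAbs_wval_rep {P : Finset (Finset ℤ)} (s : {B // B ∈ reps P} → Bool)
    (e : {B // B ∈ reps P} → ℕ) {B : Finset ℤ} (h : B ∈ reps P) :
    (wval P s e B).natAbs = e ⟨B, h⟩ := by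
  rw [wval, dif_pos h]
  split_ifs <;> simp

lemma wval_eq_zero_iff {n : ℕ} {P : Finset (Finset ℤ)} (hP : P ∈ BPartitions n)
    (s : {B // B ∈ reps P} → Bool) (e : {B // B ∈ reps P} → ℕ)
    (he1 : ∀ r, 1 ≤ e r) {B : Finset ℤ} (hB : B ∈ P) :
    wval P s e B = 0 ↔ negBlock B = B := by
  constructor
  · intro h0
    by_contra hne
    rcases tri hP hB hne with h | h
    · have := natAbs_wval_rep s e h
      rw [h0] at this
      have := he1 ⟨B, h⟩
      omega
    · have h1 := natAbs_wval_rep s e h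
      rw [wval_negBlock hP, h0] at h1
      have := he1 ⟨negBlock B, h⟩
      simp at h1
      omega
  · intro hself
    have h1 : B ∉ reps P := by
      rw [reps, mem_filter]
      push_neg
      intro _ h'
      exact absurd hself h'
    have h2 : negBlock B ∉ reps P := by rwa [hself]
    rw [wval, dif_neg h1, dif_neg h2]

lemma wval_inj {n : ℕ} {P : Finset (Finset ℤ)} (hP : P ∈ BPartitions n)
    (s : {B // B ∈ reps P} → Bool) (e : {B // B ∈ reps P} → ℕ)
    (he1 : ∀ r, 1 ≤ e r) (hinj : Function.Injective e)
    {B C : Finset ℤ} (hB : B ∈ P) (hC : C ∈ P)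
    (h : wval P s e B = wval P s e C) : B = C := by
  have repcase : ∀ B' C' : Finset ℤ, (hB' : B' ∈ reps P) → (hC' : C' ∈ reps P) →
      wval P s e B' = wval P s e C' → B' = C' := by
    intro B' C' hB' hC' h'
    have h1 := natAbs_wval_rep s e hB'
    have h2 := natAbs_wval_rep s e hC'
    rw [h'] at h1
    exact congrArg Subtype.val (hinj (h1.symm.trans h2))
  by_cases hz : wval P s e B = 0
  · have hzB := (wval_eq_zero_iff hP s e he1 hB).mp hz
    have hzC := (wval_eq_zero_iff hP s e he1 hC).mp (h ▸ hz)
    have hcard := (bp_unpack hP).2.2.2.2.2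
    exact card_le_one.mp hcard B (mem_filter.mpr ⟨hB, hzB⟩) C (mem_filter.mpr ⟨hC, hzC⟩)
  · have hneB : negBlock B ≠ B := fun h' => hz ((wval_eq_zero_iff hP s e he1 hB).mpr h')
    have hneC : negBlock C ≠ C := fun h' =>
      hz (h.trans ((wval_eq_zero_iff hP s e he1 hC).mpr h'))
    rcases tri hP hB hneB with h1 | h1 <;> rcases tri hP hC hneC with h2 | h2
    · exact repcase B C h1 h2 h
    · exfalso
      have ha := natAbs_wval_rep s e h1
      have hb := natAbs_wval_rep s e h2
      rw [wval_negBlock hP] at hb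
      have hee : e ⟨B, h1⟩ = e ⟨negBlock C, h2⟩ := by
        rw [← ha, ← hb, h]; simp
      have hBC : B = negBlock C := congrArg Subtype.val (hinj hee)
      have h3 : wval P s e B = - wval P s e C := by rw [hBC, wval_negBlock hP]
      omega
    · exfalso
      have ha := natAbs_wval_rep s e h2
      have hb := natAbs_wval_rep s e h1
      rw [wval_negBlock hP] at hb
      have hee : e ⟨C, h2⟩ = e ⟨negBlock B, h1⟩ := by
        rw [← ha, ← hb, h]; simp
      have hBC : C = negBlock B := congrArg Subtype.val (hinj hee)
      have h3 : wval P s e C = - wval P s e B := by rw [hBC, wval_negBlock hP]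
      omega
    · have : negBlock B = negBlock C := by
        apply repcase _ _ h1 h2
        rw [wval_negBlock hP, wval_negBlock hP, h]
      exact negBlock_injective this

noncomputable def bw (n : ℕ) (P : Finset (Finset ℤ)) (s : {B // B ∈ reps P} → Bool)
    (e : {B // B ∈ reps P} → ℕ) : Fin n → ℤ :=
  fun t => wval P s e (blockOf P ((t:ℤ)+1))

lemma Gf_bw {n : ℕ} {P : Finset (Finset ℤ)} (hP : P ∈ BPartitions n)
    (s : {B // B ∈ reps P} → Bool) (e : {B // B ∈ reps P} → ℕ)
    {i : ℤ} (hi : i ∈ pmN n) :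
    Gf n (bw n P s e) i = wval P s e (blockOf P i) := by
  have hi' := mem_pmN.mp hi
  rcases lt_or_gt_of_ne hi'.1 with hneg | hpos
  · -- i < 0
    have h1 : ¬(1 ≤ i ∧ i ≤ (n:ℤ)) := by omega
    have h2 : 1 ≤ -i ∧ -i ≤ (n:ℤ) := by omega
    rw [Gf, dif_neg h1, dif_pos h2]
    have hcast : ((((-i-1).toNat : ℕ) : ℤ) + 1) = -i := by omega
    have : bw n P s e ⟨(-i-1).toNat, by omega⟩ = wval P s e (blockOf P (-i)) := by
      rw [bw]
      congr 2
    rw [this, blockOf_neg hP hi, wval_negBlock hP]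
    ring
  · have h1 : 1 ≤ i ∧ i ≤ (n:ℤ) := by omega
    rw [Gf, dif_pos h1]
    have hcast : ((((i-1).toNat : ℕ) : ℤ) + 1) = i := by omega
    rw [bw]
    congr 2

lemma bw_mem_FF {n m : ℕ} (P : Finset (Finset ℤ)) (s : {B // B ∈ reps P} → Bool)
    (e : {B // B ∈ reps P} → ℕ) (hem : ∀ r, e r ≤ m) :
    bw n P s e ∈ FF n m := by
  rw [FF, Fintype.mem_piFinset]
  intro t
  rw [mem_Icc, bw]
  set B := blockOf P ((t:ℤ)+1)
  rw [wval]
  split_ifs with h1 hs h2 hs2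
  · have := hem ⟨B, h1⟩; omega
  · have := hem ⟨B, h1⟩; omega
  · have := hem ⟨negBlock B, h2⟩; omega
  · have := hem ⟨negBlock B, h2⟩; omega
  · omega

lemma phi_bw {n : ℕ} {P : Finset (Finset ℤ)} (hP : P ∈ BPartitions n)
    (s : {B // B ∈ reps P} → Bool) (e : {B // B ∈ reps P} → ℕ)
    (he1 : ∀ r, 1 ≤ e r) (hinj : Function.Injective e) :
    phi n (bw n P s e) = P := by
  have hblk : ∀ i ∈ pmN n, blk n (bw n P s e) i = blockOf P i := by
    intro i hi
    ext j
    simp only [blk, mem_filter]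
    constructor
    · rintro ⟨hj, hv⟩
      rw [Gf_bw hP s e hj, Gf_bw hP s e hi] at hv
      have := wval_inj hP s e he1 hinj (blockOf_mem hP hj).1 (blockOf_mem hP hi).1 hv
      exact this ▸ (blockOf_mem hP hj).2
    · intro hj
      have hjpm : j ∈ pmN n := (bp_unpack hP).1 _ (blockOf_mem hP hi).1 hj
      refine ⟨hjpm, ?_⟩
      rw [Gf_bw hP s e hjpm, Gf_bw hP s e hi,
        blockOf_eq hP (blockOf_mem hP hi).1 hj]
  apply Finset.Subset.antisymm
  · intro B hB
    obtain ⟨i, hi, rfl⟩ := mem_image.mp hB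
    rw [hblk i hi]
    exact (blockOf_mem hP hi).1
  · intro B hB
    obtain ⟨i, hi⟩ := (bp_unpack hP).2.1 B hB
    have hipm : i ∈ pmN n := (bp_unpack hP).1 B hB hi
    rw [phi, mem_image]
    exact ⟨i, hipm, by rw [hblk i hipm, blockOf_eq hP hB hi]⟩

lemma fiber_blk {n : ℕ} {P : Finset (Finset ℤ)} {g : Fin n → ℤ}
    (hphi : phi n g = P) {B : Finset ℤ} (hB : B ∈ P) {i : ℤ} (hi : i ∈ B) :
    B = blk n g i := by
  rw [← hphi, phi] at hB
  obtain ⟨i₀, hi₀, rfl⟩ := mem_image.mp hB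
  exact (blk_eq_of_val_eq (val_eq_of_mem_blk hi)).symm

lemma fiber_const {n : ℕ} {P : Finset (Finset ℤ)} {g : Fin n → ℤ}
    (hphi : phi n g = P) {B : Finset ℤ} (hB : B ∈ P) {i j : ℤ}
    (hi : i ∈ B) (hj : j ∈ B) : Gf n g j = Gf n g i := by
  have := fiber_blk hphi hB hi
  exact val_eq_of_mem_blk (this ▸ hj)

lemma fiber_zero_iff {n : ℕ} {P : Finset (Finset ℤ)} (hP : P ∈ BPartitions n)
    {g : Fin n → ℤ} (hphi : phi n g = P) {B : Finset ℤ} (hB : B ∈ P) {i : ℤ}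
    (hi : i ∈ B) : Gf n g i = 0 ↔ negBlock B = B := by
  constructor
  · intro h0
    have hipm : i ∈ pmN n := (bp_unpack hP).1 B hB hi
    have hmem : -i ∈ blk n g i := by
      rw [blk, mem_filter]
      exact ⟨neg_mem_pmN hipm, by rw [Gf_neg, h0]; ring⟩
    rw [← fiber_blk hphi hB hi] at hmem
    have hiNB : i ∈ negBlock B := mem_negBlock.mpr hmem
    have hNB := (bp_unpack hP).2.2.2.2.1 B hB
    by_contra hne
    have hd := (bp_unpack hP).2.2.1 _ hNB _ hB hne
    rw [disjoint_left] at hd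
    exact hd hiNB hi
  · intro hself
    have : -i ∈ B := by rw [← hself, mem_negBlock]; simpa using hi
    have := fiber_const hphi hB hi this
    rw [Gf_neg] at this
    omega

lemma Gf_bound {n m : ℕ} {g : Fin n → ℤ} (hg : g ∈ FF n m) (i : ℤ) :
    -(m:ℤ) ≤ Gf n g i ∧ Gf n g i ≤ m := by
  rw [FF, Fintype.mem_piFinset] at hg
  rw [Gf]
  split_ifs with h1 h2
  · have := hg ⟨(i-1).toNat, by omega⟩; rw [mem_Icc] at this; omega
  · have := hg ⟨(-i-1).toNat, by omega⟩; rw [mem_Icc] at this; omega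
  · omega

def fwS (n : ℕ) (P : Finset (Finset ℤ)) (g : Fin n → ℤ) : {B // B ∈ reps P} → Bool :=
  fun r => decide (0 < Gf n g ((mu r.1 : ℕ) : ℤ))

def fwE (n : ℕ) (P : Finset (Finset ℤ)) (g : Fin n → ℤ) : {B // B ∈ reps P} → ℕ :=
  fun r => (Gf n g ((mu r.1 : ℕ) : ℤ)).natAbs

lemma rep_mem {P : Finset (Finset ℤ)} {B : Finset ℤ} (hB : B ∈ reps P) :
    B ∈ P ∧ negBlock B ≠ B ∧ ((mu B : ℕ) : ℤ) ∈ B := by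
  have := mem_filter.mp hB
  exact ⟨this.1, this.2.1, this.2.2⟩

lemma fwE_pos {n : ℕ} {P : Finset (Finset ℤ)} (hP : P ∈ BPartitions n)
    {g : Fin n → ℤ} (hphi : phi n g = P) (r : {B // B ∈ reps P}) :
    1 ≤ fwE n P g r := by
  obtain ⟨hBP, hne, hmu⟩ := rep_mem r.2
  have h0 := fiber_zero_iff hP hphi hBP hmu
  have hne0 : Gf n g ((mu r.1 : ℕ) : ℤ) ≠ 0 := fun hz => hne (h0.mp hz)
  simp only [fwE]
  omega

lemma fwE_le {n m : ℕ} {P : Finset (Finset ℤ)} {g : Fin n → ℤ} (hg : g ∈ FF n m)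
    (r : {B // B ∈ reps P}) : fwE n P g r ≤ m := by
  have := Gf_bound hg ((mu r.1 : ℕ) : ℤ)
  simp only [fwE]
  omega

lemma fwE_inj {n : ℕ} {P : Finset (Finset ℤ)} (hP : P ∈ BPartitions n)
    {g : Fin n → ℤ} (hphi : phi n g = P) :
    Function.Injective (fwE n P g) := by
  rintro ⟨B, hB⟩ ⟨C, hC⟩ h
  obtain ⟨hBP, hBne, hBmu⟩ := rep_mem hB
  obtain ⟨hCP, hCne, hCmu⟩ := rep_mem hC
  have hBpm : ((mu B : ℕ) : ℤ) ∈ pmN n := (bp_unpack hP).1 B hBP hBmu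
  have hCpm : ((mu C : ℕ) : ℤ) ∈ pmN n := (bp_unpack hP).1 C hCP hCmu
  simp only [fwE] at h
  have hcases : Gf n g (mu B : ℤ) = Gf n g (mu C : ℤ) ∨
      Gf n g (mu B : ℤ) = -Gf n g (mu C : ℤ) := by omega
  rcases hcases with hv | hv
  · have : B = C := by
      rw [fiber_blk hphi hBP hBmu, fiber_blk hphi hCP hCmu, blk_eq_of_val_eq hv]
    exact Subtype.ext this
  · exfalso
    have hnegC : negBlock C ∈ P := (bp_unpack hP).2.2.2.2.1 C hCP
    have hmemnegC : -((mu C : ℕ) : ℤ) ∈ negBlock C := mem_negBlock.mpr (by simpa using hCmu)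
    have hv' : Gf n g (mu B : ℤ) = Gf n g (-(mu C : ℤ)) := by rw [Gf_neg]; omega
    have hBC : B = negBlock C := by
      rw [fiber_blk hphi hBP hBmu, fiber_blk hphi hnegC hmemnegC, blk_eq_of_val_eq hv']
    have := notboth hP hC
    rw [← hBC] at this
    exact this hB

lemma wval_fw {n : ℕ} {P : Finset (Finset ℤ)} (hP : P ∈ BPartitions n)
    {g : Fin n → ℤ} (hphi : phi n g = P) {C : Finset ℤ} (hC : C ∈ reps P) :
    wval P (fwS n P g) (fwE n P g) C = Gf n g ((mu C : ℕ) : ℤ) := by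
  obtain ⟨hCP, hCne, hCmu⟩ := rep_mem hC
  have hne0 : Gf n g ((mu C : ℕ) : ℤ) ≠ 0 :=
    fun hz => hCne ((fiber_zero_iff hP hphi hCP hCmu).mp hz)
  rw [wval, dif_pos hC]
  simp only [fwS, fwE, decide_eq_true_eq]
  split_ifs with h <;> omega

lemma left_inv {n : ℕ} {P : Finset (Finset ℤ)} (hP : P ∈ BPartitions n)
    {g : Fin n → ℤ} (hphi : phi n g = P) :
    bw n P (fwS n P g) (fwE n P g) = g := by
  have hrec : ∀ i ∈ pmN n, wval P (fwS n P g) (fwE n P g) (blockOf P i) = Gf n g i := by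
    intro i hipm
    obtain ⟨hBP, hiB⟩ := blockOf_mem hP hipm
    generalize hBdef : blockOf P i = B at hBP hiB ⊢
    by_cases h1 : B ∈ reps P
    · rw [wval_fw hP hphi h1]
      exact fiber_const hphi hBP hiB (rep_mem h1).2.2
    · by_cases h2 : negBlock B ∈ reps P
      · have hkey : wval P (fwS n P g) (fwE n P g) (negBlock B)
            = - wval P (fwS n P g) (fwE n P g) B :=
          wval_negBlock hP (fwS n P g) (fwE n P g) B
        rw [wval_fw hP hphi h2] at hkey
        obtain ⟨hNBP, hNBne, hNBmu⟩ := rep_mem h2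
        have hmem : -((mu (negBlock B) : ℕ) : ℤ) ∈ B := mem_negBlock.mp hNBmu
        have hgneg : Gf n g ((mu (negBlock B) : ℕ) : ℤ) = - Gf n g i := by
          have h3 := fiber_const hphi hBP hiB hmem
          rw [Gf_neg] at h3
          omega
        omega
      · have hself : negBlock B = B := by
          by_contra hne
          rcases tri hP hBP hne with h | h
          · exact h1 h
          · exact h2 h
        rw [wval, dif_neg h1, dif_neg h2]
        exact ((fiber_zero_iff hP hphi hBP hiB).mpr hself).symm
  funext t
  rw [bw]
  have hipm : ((t:ℤ)+1) ∈ pmN n := by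
    rw [mem_pmN]
    have := t.isLt
    omega
  rw [hrec _ hipm, Gf_coe]

lemma right_inv_S {n : ℕ} {P : Finset (Finset ℤ)} (hP : P ∈ BPartitions n)
    (s : {B // B ∈ reps P} → Bool) (e : {B // B ∈ reps P} → ℕ)
    (he1 : ∀ r, 1 ≤ e r) (r : {B // B ∈ reps P}) :
    fwS n P (bw n P s e) r = s r ∧ fwE n P (bw n P s e) r = e r := by
  obtain ⟨hBP, hBne, hBmu⟩ := rep_mem r.2
  have hpm : ((mu r.1 : ℕ) : ℤ) ∈ pmN n := (bp_unpack hP).1 _ hBP hBmu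
  have h1 : Gf n (bw n P s e) ((mu r.1 : ℕ) : ℤ) = wval P s e r.1 := by
    rw [Gf_bw hP s e hpm, blockOf_eq hP hBP hBmu]
  have h2 : wval P s e r.1 = if s r then (e r : ℤ) else -(e r : ℤ) := by
    rw [wval, dif_pos r.2]
  have he := he1 r
  constructor
  · simp only [fwS, h1, h2]
    by_cases hs : s r <;> simp [hs] <;> omega
  · simp only [fwE, h1, h2]
    by_cases hs : s r <;> simp [hs]

lemma fiber_card {n m : ℕ} {P : Finset (Finset ℤ)} (hP : P ∈ BPartitions n) :
    ((FF n m).filter (fun g => phi n g = P)).card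
      = 2 ^ (reps P).card * Nat.descFactorial m (reps P).card := by
  classical
  have hcardT : (Finset.univ : Finset (({B // B ∈ reps P} → Bool) ×
      ({B // B ∈ reps P} ↪ {a // a ∈ Finset.Icc 1 m}))).card
      = 2 ^ (reps P).card * Nat.descFactorial m (reps P).card := by
    rw [card_univ, Fintype.card_prod, Fintype.card_fun, Fintype.card_embedding_eq]
    simp [Fintype.card_coe, Nat.card_Icc]
  rw [← hcardT]
  refine card_bij'
    (fun g hg => (fwS n P g,
      ⟨fun r => ⟨fwE n P g r, mem_Icc.mpr
          ⟨fwE_pos hP (mem_filter.mp hg).2 r, fwE_le (mem_filter.mp hg).1 r⟩⟩,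
        fun r r' hrr => fwE_inj hP (mem_filter.mp hg).2 (congrArg Subtype.val hrr)⟩))
    (fun p hp => bw n P p.1 (fun r => ((p.2 r : {a // a ∈ Finset.Icc 1 m}) : ℕ)))
    (fun g hg => mem_univ _) ?hj ?left ?right
  case hj =>
    intro p hp
    rw [mem_filter]
    have he1 : ∀ r, 1 ≤ ((p.2 r : {a // a ∈ Finset.Icc 1 m}) : ℕ) :=
      fun r => (mem_Icc.mp (p.2 r).2).1
    have hem : ∀ r, ((p.2 r : {a // a ∈ Finset.Icc 1 m}) : ℕ) ≤ m :=
      fun r => (mem_Icc.mp (p.2 r).2).2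
    have hinj : Function.Injective (fun r => ((p.2 r : {a // a ∈ Finset.Icc 1 m}) : ℕ)) :=
      fun a b h => p.2.injective (Subtype.ext h)
    exact ⟨bw_mem_FF P p.1 _ hem, phi_bw hP p.1 _ he1 hinj⟩
  case left =>
    intro g hg
    exact left_inv hP (mem_filter.mp hg).2
  case right =>
    intro p hp
    have he1 : ∀ r, 1 ≤ ((p.2 r : {a // a ∈ Finset.Icc 1 m}) : ℕ) :=
      fun r => (mem_Icc.mp (p.2 r).2).1
    have h := right_inv_S hP p.1 (fun r => ((p.2 r : {a // a ∈ Finset.Icc 1 m}) : ℕ)) he1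
    refine Prod.ext ?_ ?_
    · funext r
      exact (h r).1
    · apply Function.Embedding.ext
      intro r
      apply Subtype.ext
      exact (h r).2

lemma SB_eq_reps_count (n k : ℕ)
    (SBdef : ℕ → ℕ → ℕ)
    (hdef : ∀ k, SBdef n k = ((BPartitions n).filter
      (fun P => (P.filter (fun B => negBlock B ≠ B)).card = 2 * k)).card) :
    SBdef n k = ((BPartitions n).filter (fun P => (reps P).card = k)).card := by
  rw [hdef]
  congr 1
  apply filter_congr
  intro P hP
  rw [card_nzb hP]
  omega

lemma count_identity (n m : ℕ)
    (SBdef : ℕ → ℕ → ℕ)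
    (hdef : ∀ k, SBdef n k = ((BPartitions n).filter
      (fun P => (P.filter (fun B => negBlock B ≠ B)).card = 2 * k)).card) :
    (2*m+1)^n = ∑ k ∈ Finset.range (n+1), SBdef n k * (2^k * Nat.descFactorial m k) := by
  classical
  rw [← card_FF n m,
    card_eq_sum_card_fiberwise (f := phi n) (t := BPartitions n)
      (fun g _ => phi_mem_BPartitions n g)]
  have step1 : ∑ P ∈ BPartitions n, ((FF n m).filter (fun g => phi n g = P)).card
      = ∑ P ∈ BPartitions n, 2 ^ (reps P).card * Nat.descFactorial m (reps P).card :=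
    sum_congr rfl (fun P hP => fiber_card hP)
  rw [step1]
  rw [← sum_fiberwise_of_maps_to (g := fun P => (reps P).card) (t := Finset.range (n+1))
    (fun P hP => mem_range.mpr (Nat.lt_succ_of_le (reps_card_le hP)))
    (fun P => 2 ^ (reps P).card * Nat.descFactorial m (reps P).card)]
  apply sum_congr rfl
  intro k hk
  rw [SB_eq_reps_count n k SBdef hdef]
  rw [sum_congr rfl (fun P hP => by rw [(mem_filter.mp hP).2])]
  rw [sum_const, smul_eq_mul]

lemma fallB_odd' (m k : ℕ) :
    (∏ i ∈ Finset.range k, (2*(m:ℝ)+1 - (2 * (i : ℝ) + 1)))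
      = ((2^k * Nat.descFactorial m k : ℕ) : ℝ) := by
  by_cases h : k ≤ m
  · have step1 : (∏ i ∈ Finset.range k, (2*(m:ℝ)+1 - (2 * (i : ℝ) + 1)))
        = ∏ i ∈ Finset.range k, 2 * ((m:ℝ) - i) :=
      prod_congr rfl (fun i _ => by ring)
    rw [step1, prod_mul_distrib, prod_const, card_range]
    rw [Nat.cast_mul, Nat.cast_pow, Nat.descFactorial_eq_prod_range, Nat.cast_prod]
    push_cast
    congr 1
    apply prod_congr rfl
    intro i hi
    have : i ≤ m := le_trans (Nat.le_of_lt_succ (Nat.lt_succ_of_lt (mem_range.mp hi))) h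
    rw [Nat.cast_sub this]
  · have h1 : m ∈ Finset.range k := mem_range.mpr (by omega)
    rw [prod_eq_zero h1 (by ring)]
    rw [Nat.descFactorial_eq_zero_iff_lt.mpr (by omega)]
    simp

end BPf

theorem pow_eq_sum_SB_fallB (x : ℝ) (n : ℕ) :
    x ^ n = ∑ k ∈ Finset.range (n + 1), (SB n k : ℝ) * fallB x k := by
  classical
  set p : Polynomial ℝ := Polynomial.X^n - ∑ k ∈ Finset.range (n+1),
    Polynomial.C ((SB n k : ℝ)) * ∏ i ∈ Finset.range k, (Polynomial.X - Polynomial.C (2*(i:ℝ)+1))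
    with hp
  have heval : ∀ y : ℝ, p.eval y
      = y^n - ∑ k ∈ Finset.range (n+1), (SB n k : ℝ) * fallB y k := by
    intro y
    rw [hp]
    simp only [Polynomial.eval_sub, Polynomial.eval_pow, Polynomial.eval_X, Polynomial.eval_finset_sum, Polynomial.eval_mul, Polynomial.eval_C, Polynomial.eval_prod, fallB]
  have hroot : ∀ m : ℕ, p.IsRoot (2*(m:ℝ)+1) := by
    intro m
    rw [Polynomial.IsRoot, heval]
    have hc := BPf.count_identity n m SB (fun k => rfl)
    have hcast : ((2*m+1 : ℕ) : ℝ)^n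
        = ∑ k ∈ Finset.range (n+1), (SB n k : ℝ) * ((2^k * Nat.descFactorial m k : ℕ) : ℝ) := by
      rw [← Nat.cast_pow, hc]
      push_cast
      exact Finset.sum_congr rfl (fun k _ => by ring)
    have h2 : (2*(m:ℝ)+1)^n = ((2*m+1 : ℕ) : ℝ)^n := by push_cast; ring_nf
    rw [h2, hcast, sub_eq_zero]
    exact Finset.sum_congr rfl (fun k _ => by rw [fallB, BPf.fallB_odd' m k])
  have hinf : {y : ℝ | p.IsRoot y}.Infinite := by
    refine Set.infinite_of_injective_forall_mem (f := fun m : ℕ => 2*(m:ℝ)+1) ?_ hroot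
    intro a b hab
    simp only at hab
    have : (a:ℝ) = b := by linarith
    exact_mod_cast this
  have hp0 := Polynomial.eq_zero_of_infinite_isRoot p hinf
  have hx := heval x
  rw [hp0] at hx
  simp only [Polynomial.eval_zero] at hx
  linarith
end

section
/- (Worpitzky identity of type B) For all natural numbers m and n, (1+2m)^n = Σ_{k=0}^{n} C(n+m−k, n)·E^B_{n,k}, where E^B_{n,k} is the number of signed permutations in the hyperoctahedral group B_n with exactly k descents. -/
/-- The finite set of signed permutations of `[n]`, encoded by the list of values
`w(1), …, w(n)`: integers in `{±1,…,±n}` whose absolute values are pairwise distinct. -/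
noncomputable def SignedPerms (n : ℕ) : Finset (Fin n → ℤ) :=
  (Fintype.piFinset (fun _ : Fin n => pmN n)).filter
    (fun w => ∀ i j : Fin n, |w i| = |w j| → i = j)

/-- Extension of `w` with `w(0) := 0`. -/
def extSigned (n : ℕ) (w : Fin n → ℤ) : ℕ → ℤ :=
  fun j => if h : 0 < j ∧ j ≤ n then w ⟨j - 1, by omega⟩ else 0

/-- The number of descents of a signed permutation: indices `0 ≤ i ≤ n-1` with
`w(i) > w(i+1)`, where `w(0) := 0`. -/
def descB (n : ℕ) (w : Fin n → ℤ) : ℕ :=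
  ((Finset.range n).filter (fun i => extSigned n w (i + 1) < extSigned n w i)).card

/-- The type `B` Eulerian number: the number of signed permutations of `[n]`
with exactly `k` descents. -/
noncomputable def EB (n k : ℕ) : ℕ := ((SignedPerms n).filter (fun w => descB n w = k)).card

open Finset

lemma mem_pmN {n : ℕ} {x : ℤ} : x ∈ pmN n ↔ x ≠ 0 ∧ |x| ≤ n := by
  rw [pmN, Finset.mem_erase, Finset.mem_Icc, ← abs_le]

lemma mem_signedPerms {n : ℕ} {w : Fin n → ℤ} :
    w ∈ SignedPerms n ↔ (∀ i, w i ≠ 0 ∧ |w i| ≤ n) ∧ ∀ i j, |w i| = |w j| → i = j := by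
  simp [SignedPerms, Fintype.mem_piFinset, mem_pmN]

/-- Insertion of the value `±(n+1)` at slot `p` into a signed permutation of `[n]`. -/
def ins (n : ℕ) (w : Fin n → ℤ) (p : Fin (n + 1)) (s : Bool) : Fin (n + 1) → ℤ :=
  fun i => if h1 : i.val < p.val then w ⟨i.val, by have := p.isLt; omega⟩
    else if h2 : i.val = p.val then (if s then ((n : ℤ) + 1) else -((n : ℤ) + 1))
    else w ⟨i.val - 1, by have := i.isLt; omega⟩

lemma extSigned_ins (n : ℕ) (w : Fin n → ℤ) (p : Fin (n + 1)) (s : Bool) (j : ℕ) :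
    extSigned (n + 1) (ins n w p s) j =
      if j ≤ p.val then extSigned n w j
      else if j = p.val + 1 then (if s then ((n : ℤ) + 1) else -((n : ℤ) + 1))
      else extSigned n w (j - 1) := by
  have hp := p.isLt
  simp only [extSigned, ins]
  split_ifs <;> first | rfl | (exfalso; omega)

lemma descB_eq_sum (n : ℕ) (w : Fin n → ℤ) :
    descB n w = ∑ i ∈ range n, if extSigned n w (i + 1) < extSigned n w i then 1 else 0 :=
  Finset.card_filter _ _

lemma abs_extSigned {n : ℕ} {w : Fin n → ℤ} (hw : w ∈ SignedPerms n) (j : ℕ) :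
    |extSigned n w j| ≤ (n : ℤ) := by
  rw [extSigned]
  split
  · exact ((mem_signedPerms.1 hw).1 _).2
  · simp

lemma descB_le (n : ℕ) (w : Fin n → ℤ) : descB n w ≤ n := by
  simpa [descB] using Finset.card_filter_le (range n)
    (fun i => extSigned n w (i + 1) < extSigned n w i)

lemma EB_eq_zero {n k : ℕ} (h : n < k) : EB n k = 0 := by
  rw [EB, Finset.card_eq_zero, Finset.filter_eq_empty_iff]
  intro w _
  have := descB_le n w
  omega

lemma descB_ins (n : ℕ) {w : Fin n → ℤ} (hw : w ∈ SignedPerms n) (p : Fin (n + 1)) (s : Bool) :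
    descB (n + 1) (ins n w p s) =
      if p.val = n then (if s then descB n w else descB n w + 1)
      else (if extSigned n w (p.val + 1) < extSigned n w p.val then descB n w
            else descB n w + 1) := by
  have hb : ∀ j, |extSigned n w j| ≤ (n : ℤ) := abs_extSigned hw
  have hp := p.isLt
  have hE := extSigned_ins n w p s
  set N : ℕ → ℕ := fun i =>
    if extSigned (n + 1) (ins n w p s) (i + 1) < extSigned (n + 1) (ins n w p s) i then 1 else 0
    with hN
  set O : ℕ → ℕ := fun i =>
    if extSigned n w (i + 1) < extSigned n w i then 1 else 0 with hO
  have hhead : ∀ i ∈ range p.val, N i = O i := by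
    intro i hi
    rw [mem_range] at hi
    rw [hN]
    simp only
    rw [hE (i + 1), hE i, if_pos (show i + 1 ≤ p.val by omega), if_pos (show i ≤ p.val by omega)]
  have hNp : N p.val = if s then 0 else 1 := by
    rw [hN]
    simp only
    rw [hE (p.val + 1), hE p.val, if_neg (show ¬ p.val + 1 ≤ p.val by omega),
      if_pos (show p.val + 1 = p.val + 1 from rfl), if_pos (le_refl p.val)]
    have h1 := hb p.val
    rw [abs_le] at h1
    cases s with
    | false =>
      rw [if_neg (show ¬ (false = true) by simp),
        if_pos (show -((n:ℤ) + 1) < extSigned n w p.val by omega),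
        if_neg (show ¬ (false = true) by simp)]
    | true =>
      rw [if_pos (show (true = true) from rfl),
        if_neg (show ¬ ((n:ℤ) + 1 < extSigned n w p.val) by omega),
        if_pos (show (true = true) from rfl)]
  have hdnew : descB (n + 1) (ins n w p s) = ∑ i ∈ range (n + 1), N i := descB_eq_sum _ _
  have hdold : descB n w = ∑ i ∈ range n, O i := descB_eq_sum _ _
  by_cases hpn : p.val = n
  · rw [if_pos hpn, hdnew, Finset.sum_range_succ,
      Finset.sum_congr rfl (fun i hi => hhead i (by rw [mem_range] at hi ⊢; omega)), ← hdold]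
    rw [hpn] at hNp
    rw [hNp]
    cases s <;> simp
  · rw [if_neg hpn]
    have hplt : p.val < n := by omega
    have hNp1 : N (p.val + 1) = if s then 1 else 0 := by
      rw [hN]
      simp only
      rw [hE (p.val + 1 + 1), hE (p.val + 1), if_neg (show ¬ p.val + 1 + 1 ≤ p.val by omega),
        if_neg (show ¬ p.val + 1 + 1 = p.val + 1 by omega),
        if_neg (show ¬ p.val + 1 ≤ p.val by omega),
        if_pos (show p.val + 1 = p.val + 1 from rfl),
        (show p.val + 1 + 1 - 1 = p.val + 1 by omega)]
      have h1 := hb (p.val + 1)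
      rw [abs_le] at h1
      cases s with
      | false =>
        rw [if_neg (show ¬ (false = true) by simp),
          if_neg (show ¬ (extSigned n w (p.val + 1) < -((n:ℤ) + 1)) by omega),
          if_neg (show ¬ (false = true) by simp)]
      | true =>
        rw [if_pos (show (true = true) from rfl),
          if_pos (show extSigned n w (p.val + 1) < (n:ℤ) + 1 by omega),
          if_pos (show (true = true) from rfl)]
    have htail : ∀ i ∈ Finset.Ico (p.val + 2) (n + 1), N i = O (i - 1) := by
      intro i hi
      rw [Finset.mem_Ico] at hi
      rw [hN]
      simp only
      rw [hE (i + 1), hE i, if_neg (show ¬ i + 1 ≤ p.val by omega),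
        if_neg (show ¬ i + 1 = p.val + 1 by omega),
        if_neg (show ¬ i ≤ p.val by omega),
        if_neg (show ¬ i = p.val + 1 by omega),
        (show i + 1 - 1 = (i - 1) + 1 by omega)]
    have hnew : ∑ i ∈ range (n + 1), N i
        = (∑ i ∈ range p.val, O i) + N p.val + N (p.val + 1)
          + ∑ i ∈ Finset.Ico (p.val + 1) n, O i := by
      rw [← Finset.sum_range_add_sum_Ico N (by omega : p.val ≤ n + 1),
        Finset.sum_eq_sum_Ico_succ_bot (by omega : p.val < n + 1),
        Finset.sum_eq_sum_Ico_succ_bot (by omega : p.val + 1 < n + 1),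
        Finset.sum_congr rfl hhead, Finset.sum_congr rfl htail]
      have : ∑ i ∈ Finset.Ico (p.val + 2) (n + 1), O (i - 1)
          = ∑ i ∈ Finset.Ico (p.val + 1) n, O i := by
        rw [Finset.sum_Ico_eq_sum_range, Finset.sum_Ico_eq_sum_range]
        have hc : n + 1 - (p.val + 2) = n - (p.val + 1) := by omega
        rw [hc]
        refine Finset.sum_congr rfl fun i hi => ?_
        congr 1
        omega
      rw [this]
      ring
    have hold : ∑ i ∈ range n, O i
        = (∑ i ∈ range p.val, O i) + O p.val + ∑ i ∈ Finset.Ico (p.val + 1) n, O i := by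
      rw [← Finset.sum_range_add_sum_Ico O (by omega : p.val ≤ n),
        Finset.sum_eq_sum_Ico_succ_bot (by omega : p.val < n)]
      ring
    rw [hdnew, hnew, hdold, hold]
    have hOp : O p.val = if extSigned n w (p.val + 1) < extSigned n w p.val then 1 else 0 := rfl
    rw [hNp, hNp1, hOp]
    clear hE hN hO hhead hNp hNp1 htail hnew hold hdnew hdold hb
    cases s <;> simp only [Bool.true_eq_false, Bool.false_eq_true, if_true, if_false,
      eq_self_iff_true, ite_true, ite_false] <;> split_ifs <;> omega

lemma ins_apply_lt {n : ℕ} (w : Fin n → ℤ) (p : Fin (n + 1)) (s : Bool) (i : Fin (n + 1))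
    (h : i.val < p.val) : ins n w p s i = w ⟨i.val, by have := p.isLt; omega⟩ := by
  unfold ins
  rw [dif_pos h]

lemma ins_apply_eq {n : ℕ} (w : Fin n → ℤ) (p : Fin (n + 1)) (s : Bool) (i : Fin (n + 1))
    (h : i.val = p.val) :
    ins n w p s i = (if s = true then ((n : ℤ) + 1) else -((n : ℤ) + 1)) := by
  unfold ins
  rw [dif_neg (by omega), dif_pos h]

lemma ins_apply_gt {n : ℕ} (w : Fin n → ℤ) (p : Fin (n + 1)) (s : Bool) (i : Fin (n + 1))
    (h : p.val < i.val) : ins n w p s i = w ⟨i.val - 1, by have := i.isLt; omega⟩ := by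
  unfold ins
  rw [dif_neg (by omega), dif_neg (by omega)]

lemma newval_abs (n : ℕ) (s : Bool) :
    |(if s = true then ((n : ℤ) + 1) else -((n : ℤ) + 1))| = (n : ℤ) + 1 := by
  cases s
  · rw [if_neg (by simp : ¬ (false = true)), abs_neg, abs_of_nonneg (by positivity)]
  · rw [if_pos rfl, abs_of_nonneg (by positivity)]

lemma ins_key {n : ℕ} (w : Fin n → ℤ) (p : Fin (n + 1)) (s : Bool) (i : Fin (n + 1)) :
    (i.val = p.val ∧ |ins n w p s i| = (n : ℤ) + 1) ∨
      (i.val ≠ p.val ∧ ∃ j : Fin n, ins n w p s i = w j ∧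
        ((i.val < p.val ∧ j.val = i.val) ∨ (p.val < i.val ∧ i.val = j.val + 1))) := by
  rcases lt_trichotomy i.val p.val with h | h | h
  · exact Or.inr ⟨by omega, ⟨i.val, by have := p.isLt; omega⟩,
      ins_apply_lt w p s i h, Or.inl ⟨h, rfl⟩⟩
  · exact Or.inl ⟨h, by rw [ins_apply_eq w p s i h, newval_abs]⟩
  · refine Or.inr ⟨by omega, ⟨i.val - 1, by have := i.isLt; omega⟩,
      ins_apply_gt w p s i h, Or.inr ⟨h, ?_⟩⟩
    show i.val = i.val - 1 + 1
    omega

lemma ins_mem {n : ℕ} {w : Fin n → ℤ} (hw : w ∈ SignedPerms n) (p : Fin (n + 1)) (s : Bool) :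
    ins n w p s ∈ SignedPerms (n + 1) := by
  obtain ⟨hval, hinj⟩ := mem_signedPerms.1 hw
  rw [mem_signedPerms]
  constructor
  · intro i
    rcases ins_key w p s i with ⟨_, habs⟩ | ⟨_, j, hj, _⟩
    · constructor
      · intro h0
        rw [h0, abs_zero] at habs
        omega
      · rw [habs]
        push_cast
        omega
    · rw [hj]
      exact ⟨(hval j).1, le_trans (hval j).2 (by push_cast; omega)⟩
  · intro i i' habs
    rcases ins_key w p s i with ⟨hip, hia⟩ | ⟨hip, j, hj, hjc⟩ <;>
      rcases ins_key w p s i' with ⟨hip', hia'⟩ | ⟨hip', j', hj', hjc'⟩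
    · exact Fin.ext (by omega)
    · exfalso
      rw [hj', hia] at habs
      have := (hval j').2
      omega
    · exfalso
      rw [hj, hia'] at habs
      have := (hval j).2
      omega
    · rw [hj, hj'] at habs
      have := hinj j j' habs
      subst this
      exact Fin.ext (by omega)

lemma ins_inj {n : ℕ} {w w' : Fin n → ℤ} (hw : w ∈ SignedPerms n) (hw' : w' ∈ SignedPerms n)
    {p p' : Fin (n + 1)} {s s' : Bool} (h : ins n w p s = ins n w' p' s') :
    w = w' ∧ p = p' ∧ s = s' := by
  obtain ⟨hval, _⟩ := mem_signedPerms.1 hw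
  obtain ⟨hval', _⟩ := mem_signedPerms.1 hw'
  have happ : ∀ i : Fin (n + 1), ins n w p s i = ins n w' p' s' i := fun i => congrFun h i
  have hpp' : p = p' := by
    by_contra hne
    have h1 := happ p
    rw [ins_apply_eq w p s p rfl] at h1
    rcases ins_key w' p' s' p with ⟨hip, _⟩ | ⟨_, j, hj, _⟩
    · exact hne (Fin.ext hip)
    · rw [hj] at h1
      have h2 := (hval' j).2
      have h3 : |w' j| = (n : ℤ) + 1 := by rw [← h1, newval_abs]
      omega
  subst hpp'
  have hss' : s = s' := by
    have h1 := happ p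
    rw [ins_apply_eq w p s p rfl, ins_apply_eq w' p s' p rfl] at h1
    cases s <;> cases s' <;> simp_all <;> omega
  subst hss'
  refine ⟨funext fun j => ?_, rfl, rfl⟩
  by_cases hc : j.val < p.val
  · have h1 := happ ⟨j.val, by have := p.isLt; omega⟩
    rw [ins_apply_lt w p s _ hc, ins_apply_lt w' p s _ hc] at h1
    simpa using h1
  · have h1 := happ ⟨j.val + 1, by have := j.isLt; omega⟩
    rw [ins_apply_gt w p s _ (by show p.val < j.val + 1; omega),
      ins_apply_gt w' p s _ (by show p.val < j.val + 1; omega)] at h1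
    simpa using h1

lemma ins_surj {n : ℕ} {v : Fin (n + 1) → ℤ} (hv : v ∈ SignedPerms (n + 1)) :
    ∃ w ∈ SignedPerms n, ∃ p : Fin (n + 1), ∃ s : Bool, ins n w p s = v := by
  obtain ⟨hval, hinj⟩ := mem_signedPerms.1 hv
  -- pigeonhole: some coordinate has absolute value n+1
  have hex : ∃ i₀ : Fin (n + 1), |v i₀| = (n : ℤ) + 1 := by
    have himage : (Finset.univ.image fun i : Fin (n + 1) => |v i|)
        = Finset.Icc 1 ((n : ℤ) + 1) := by
      apply Finset.eq_of_subset_of_card_le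
      · intro x hx
        rw [Finset.mem_image] at hx
        obtain ⟨i, _, rfl⟩ := hx
        rw [Finset.mem_Icc]
        have h1 : 0 < |v i| := abs_pos.2 (hval i).1
        have h2 := (hval i).2
        constructor
        · omega
        · push_cast at h2 ⊢
          omega
      · rw [Finset.card_image_of_injective _ (fun i j hij => hinj i j hij)]
        simp [Int.card_Icc]
    have hmem : ((n : ℤ) + 1) ∈ Finset.Icc (1 : ℤ) ((n : ℤ) + 1) := by
      rw [Finset.mem_Icc]
      omega
    rw [← himage, Finset.mem_image] at hmem
    obtain ⟨i₀, _, hi₀⟩ := hmem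
    exact ⟨i₀, hi₀⟩
  obtain ⟨i₀, hi₀⟩ := hex
  set w : Fin n → ℤ := fun j =>
    if h : j.val < i₀.val then v ⟨j.val, by omega⟩ else v ⟨j.val + 1, by have := j.isLt; omega⟩
    with hwdef
  have hwv : ∀ j : Fin n, ∃ i : Fin (n + 1), w j = v i ∧ i ≠ i₀ ∧
      ((j.val < i₀.val ∧ i.val = j.val) ∨ (i₀.val ≤ j.val ∧ i.val = j.val + 1)) := by
    intro j
    by_cases h : j.val < i₀.val
    · refine ⟨⟨j.val, by omega⟩, ?_, ?_, Or.inl ⟨h, rfl⟩⟩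
      · rw [hwdef]
        exact dif_pos h
      · intro he
        rw [Fin.ext_iff] at he
        simp at he
        omega
    · refine ⟨⟨j.val + 1, by have := j.isLt; omega⟩, ?_, ?_, Or.inr ⟨by omega, rfl⟩⟩
      · rw [hwdef]
        exact dif_neg h
      · intro he
        rw [Fin.ext_iff] at he
        simp at he
        omega
  have hwmem : w ∈ SignedPerms n := by
    rw [mem_signedPerms]
    constructor
    · intro j
      obtain ⟨i, hji, hne, _⟩ := hwv j
      rw [hji]
      refine ⟨(hval i).1, ?_⟩
      have h1 := (hval i).2
      have h2 : |v i| ≠ (n : ℤ) + 1 := by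
        intro he
        exact hne (hinj i i₀ (by rw [he, hi₀]))
      push_cast at h1 ⊢
      omega
    · intro j j' habs
      obtain ⟨i, hji, _, hcase⟩ := hwv j
      obtain ⟨i', hji', _, hcase'⟩ := hwv j'
      rw [hji, hji'] at habs
      have := hinj i i' habs
      rw [Fin.ext_iff] at this ⊢
      omega
  refine ⟨w, hwmem, i₀, decide (0 < v i₀), funext fun i => ?_⟩
  rcases lt_trichotomy i.val i₀.val with h1 | h1 | h1
  · rw [ins_apply_lt w i₀ _ i h1]
    simp only [hwdef]
    rw [dif_pos (show ((⟨i.val, by have := i₀.isLt; omega⟩ : Fin n)).val < i₀.val from h1)]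
  · rw [ins_apply_eq w i₀ _ i h1]
    have hii : i = i₀ := Fin.ext h1
    subst hii
    rcases (abs_eq (by positivity : (0:ℤ) ≤ (n:ℤ) + 1)).1 hi₀ with hc | hc
    · rw [if_pos (by rw [decide_eq_true_eq]; omega), hc]
    · rw [if_neg (by rw [decide_eq_true_eq]; omega), hc]
  · rw [ins_apply_gt w i₀ _ i h1]
    simp only [hwdef]
    rw [dif_neg (show ¬ ((⟨i.val - 1, by have := i.isLt; omega⟩ : Fin n)).val < i₀.val by
      show ¬ i.val - 1 < i₀.val
      omega)]
    congr 1
    apply Fin.ext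
    show i.val - 1 + 1 = i.val
    omega

lemma EB_succ_sum (n k : ℕ) :
    EB (n + 1) k = ∑ w ∈ SignedPerms n,
      ((Finset.univ : Finset (Fin (n + 1) × Bool)).filter
        (fun ps => descB (n + 1) (ins n w ps.1 ps.2) = k)).card := by
  classical
  rw [EB]
  have hset : (SignedPerms (n + 1)).filter (fun v => descB (n + 1) v = k)
      = (SignedPerms n).biUnion (fun w =>
          (((Finset.univ : Finset (Fin (n + 1) × Bool)).filter
            (fun ps => descB (n + 1) (ins n w ps.1 ps.2) = k)).image
            (fun ps => ins n w ps.1 ps.2))) := by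
    ext v
    simp only [Finset.mem_filter, Finset.mem_biUnion, Finset.mem_image, Finset.mem_univ,
      true_and]
    constructor
    · rintro ⟨hv, hd⟩
      obtain ⟨w, hw, p, s, hins⟩ := ins_surj hv
      exact ⟨w, hw, (p, s), by rw [hins]; exact hd, hins⟩
    · rintro ⟨w, hw, ps, hd, rfl⟩
      exact ⟨ins_mem hw ps.1 ps.2, hd⟩
  rw [hset, Finset.card_biUnion]
  · refine Finset.sum_congr rfl fun w hw => ?_
    rw [Finset.card_image_of_injOn]
    intro ps _ ps' _ he
    have := ins_inj hw hw he
    exact Prod.ext this.2.1 this.2.2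
  · intro w hw w' hw' hne
    simp only [Finset.disjoint_left, Finset.mem_image]
    rintro a ⟨ps, _, rfl⟩ ⟨ps', _, he⟩
    exact hne (ins_inj hw hw' he.symm).1

lemma fiber_card {n : ℕ} (k : ℕ) {w : Fin n → ℤ} (hw : w ∈ SignedPerms n) :
    ((Finset.univ : Finset (Fin (n + 1) × Bool)).filter
      (fun ps => descB (n + 1) (ins n w ps.1 ps.2) = k)).card
    = (if k = descB n w then 2 * descB n w + 1
       else if k = descB n w + 1 then 2 * n + 1 - 2 * descB n w else 0) := by
  classical
  set d := descB n w with hd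
  have hdle : d ≤ n := descB_le n w
  set G : ℕ → ℕ := fun i =>
    if i = n then ((if k = d then 1 else 0) + (if k = d + 1 then 1 else 0))
    else (if extSigned n w (i + 1) < extSigned n w i then (if k = d then 2 else 0)
          else (if k = d + 1 then 2 else 0)) with hG
  have hterm : ∀ p : Fin (n + 1),
      (∑ s : Bool, if descB (n + 1) (ins n w p s) = k then (1 : ℕ) else 0) = G p.val := by
    intro p
    rw [Fintype.sum_bool, descB_ins n hw p true, descB_ins n hw p false, ← hd]
    simp only [eq_self_iff_true, if_true, Bool.false_eq_true, if_false, hG]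
    by_cases hpn : p.val = n
    · rw [if_pos hpn, if_pos hpn, if_pos hpn]
      split_ifs <;> omega
    · rw [if_neg hpn, if_neg hpn, if_neg hpn]
      split_ifs <;> omega
  rw [Finset.card_filter, Fintype.sum_prod_type,
    Finset.sum_congr rfl (fun p _ => hterm p), Fin.sum_univ_eq_sum_range G (n + 1),
    Finset.sum_range_succ]
  have hGn : G n = (if k = d then 1 else 0) + (if k = d + 1 then 1 else 0) := by
    simp only [hG]
    simp
  have hrest : ∀ i ∈ range n,
      G i = (if extSigned n w (i + 1) < extSigned n w i then (if k = d then 2 else 0)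
          else (if k = d + 1 then 2 else 0)) := by
    intro i hi
    rw [mem_range] at hi
    simp only [hG]
    rw [if_neg (by omega)]
  rw [hGn, Finset.sum_congr rfl hrest, Finset.sum_ite, Finset.sum_const, Finset.sum_const]
  have hcard1 : ((range n).filter fun i => extSigned n w (i + 1) < extSigned n w i).card = d :=
    rfl
  have hcard2 : ((range n).filter fun i => ¬ extSigned n w (i + 1) < extSigned n w i).card
      = n - d := by
    have := Finset.card_filter_add_card_filter_not (s := range n)
      (p := fun i => extSigned n w (i + 1) < extSigned n w i)
    rw [hcard1, Finset.card_range] at this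
    omega
  rw [hcard1, hcard2, smul_eq_mul, smul_eq_mul]
  split_ifs <;> omega

lemma EB_rec (n k : ℕ) :
    EB (n + 1) k = (2 * k + 1) * EB n k
      + (2 * n + 3 - 2 * k) * (if k = 0 then 0 else EB n (k - 1)) := by
  classical
  rw [EB_succ_sum, Finset.sum_congr rfl (fun w hw => fiber_card k hw)]
  have hterm : ∀ w ∈ SignedPerms n,
      (if k = descB n w then 2 * descB n w + 1
        else if k = descB n w + 1 then 2 * n + 1 - 2 * descB n w else 0)
      = (if descB n w = k then 2 * k + 1 else 0)
        + (if ¬ k = 0 ∧ descB n w = k - 1 then 2 * n + 3 - 2 * k else 0) := by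
    intro w _
    have hdle := descB_le n w
    split_ifs <;> omega
  rw [Finset.sum_congr rfl hterm, Finset.sum_add_distrib]
  congr 1
  · rw [← Finset.sum_filter, Finset.sum_const, smul_eq_mul, EB, mul_comm]
  · by_cases hk : k = 0
    · subst hk
      simp
    · rw [if_neg hk]
      have : ∀ w ∈ SignedPerms n,
          (if ¬ k = 0 ∧ descB n w = k - 1 then 2 * n + 3 - 2 * k else 0)
          = (if descB n w = k - 1 then 2 * n + 3 - 2 * k else 0) := by
        intro w _
        simp [hk]
      rw [Finset.sum_congr rfl this, ← Finset.sum_filter, Finset.sum_const, smul_eq_mul, EB,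
        mul_comm]

lemma EB_zero : EB 0 0 = 1 := by
  rw [EB]
  have h1 : ∀ w ∈ SignedPerms 0, descB 0 w = 0 := by
    intro w _
    rw [descB]
    simp
  rw [Finset.filter_true_of_mem h1, SignedPerms, Finset.filter_true_of_mem (by
    intro w _
    intro i j
    exact fun _ => absurd i.isLt (by omega))]
  simp

lemma key_binom (m n k : ℕ) (hk : k ≤ n) :
    (n + 1 + m - k).choose (n + 1) * (2 * k + 1)
      + (n + m - k).choose (n + 1) * (2 * n + 1 - 2 * k)
    = (1 + 2 * m) * (n + m - k).choose n := by
  rcases le_or_gt k m with hkm | hmk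
  · have ha : n + 1 + m - k = (n + m - k) + 1 := by omega
    rw [ha]
    set a := n + m - k with haa
    rw [Nat.choose_succ_succ]
    have h2 := Nat.choose_succ_right_eq a n
    have h3 : a - n = m - k := by omega
    rw [h3] at h2
    zify [hkm, (by omega : 2 * k ≤ 2 * n + 1)] at h2 ⊢
    linear_combination 2 * h2
  · have e1 : (n + 1 + m - k).choose (n + 1) = 0 := Nat.choose_eq_zero_of_lt (by omega)
    have e2 : (n + m - k).choose (n + 1) = 0 := Nat.choose_eq_zero_of_lt (by omega)
    have e3 : (n + m - k).choose n = 0 := Nat.choose_eq_zero_of_lt (by omega)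
    rw [e1, e2, e3]
    ring

theorem worpitzky_typeB (m n : ℕ) :
    (1 + 2 * m) ^ n = ∑ k ∈ Finset.range (n + 1), (n + m - k).choose n * EB n k := by
  induction n with
  | zero =>
    simp [EB_zero]
  | succ n ih =>
    rw [Finset.sum_congr rfl (fun k _ => by rw [EB_rec n k])]
    have hexp : ∀ k ∈ range (n + 2),
        (n + 1 + m - k).choose (n + 1) * ((2 * k + 1) * EB n k
          + (2 * n + 3 - 2 * k) * (if k = 0 then 0 else EB n (k - 1)))
        = (n + 1 + m - k).choose (n + 1) * (2 * k + 1) * EB n k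
          + (n + 1 + m - k).choose (n + 1) * (2 * n + 3 - 2 * k)
            * (if k = 0 then 0 else EB n (k - 1)) := by
      intro k _
      ring
    rw [Finset.sum_congr rfl hexp, Finset.sum_add_distrib]
    have hs1 : ∑ k ∈ range (n + 2), (n + 1 + m - k).choose (n + 1) * (2 * k + 1) * EB n k
        = ∑ k ∈ range (n + 1), (n + 1 + m - k).choose (n + 1) * (2 * k + 1) * EB n k := by
      rw [Finset.sum_range_succ, EB_eq_zero (by omega : n < n + 1)]
      ring
    have hs2 : ∑ k ∈ range (n + 2), (n + 1 + m - k).choose (n + 1) * (2 * n + 3 - 2 * k)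
          * (if k = 0 then 0 else EB n (k - 1))
        = ∑ k ∈ range (n + 1), (n + m - k).choose (n + 1) * (2 * n + 1 - 2 * k) * EB n k := by
      rw [Finset.sum_range_succ' (fun k => (n + 1 + m - k).choose (n + 1) * (2 * n + 3 - 2 * k)
        * (if k = 0 then 0 else EB n (k - 1))) (n + 1)]
      simp only
      norm_num
      refine Finset.sum_congr rfl fun k hk => ?_
      rw [mem_range] at hk
      have h1 : n + 1 + m - (k + 1) = n + m - k := by omega
      have h2 : 2 * n + 3 - 2 * (k + 1) = 2 * n + 1 - 2 * k := by omega
      rw [h1, h2]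
    rw [hs1, hs2, ← Finset.sum_add_distrib]
    have hcomb : ∀ k ∈ range (n + 1),
        (n + 1 + m - k).choose (n + 1) * (2 * k + 1) * EB n k
          + (n + m - k).choose (n + 1) * (2 * n + 1 - 2 * k) * EB n k
        = (1 + 2 * m) * ((n + m - k).choose n * EB n k) := by
      intro k hk
      rw [mem_range] at hk
      have := key_binom m n k (by omega)
      calc (n + 1 + m - k).choose (n + 1) * (2 * k + 1) * EB n k
            + (n + m - k).choose (n + 1) * (2 * n + 1 - 2 * k) * EB n k
          = ((n + 1 + m - k).choose (n + 1) * (2 * k + 1)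
            + (n + m - k).choose (n + 1) * (2 * n + 1 - 2 * k)) * EB n k := by ring
        _ = (1 + 2 * m) * (n + m - k).choose n * EB n k := by rw [this]
        _ = (1 + 2 * m) * ((n + m - k).choose n * EB n k) := by ring
    rw [Finset.sum_congr rfl hcomb, ← Finset.mul_sum, ← ih]
    ring
end
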